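/- Let x₁, x₂, x₃ be i.i.d. uniform on {-1,1} and y₁, y₂, y₃ i.i.d. uniform on {-1,1} with P[xᵢ = yᵢ] = 1/3 (arising from a uniformly random ranking of three alternatives). Set w = x₁+x₂+x₃ and z = y₁+y₂+y₃. Then Cov[sgn(w), sgn(z)] = -7/27. -/

import Mathlib

open MeasureTheory ProbabilityTheory

section Aux
variable {Ω : Type*} [MeasureSpace Ω] [IsProbabilityMeasure (ℙ : Measure Ω)]

lemma aux_integrable {f : Ω → ℝ} (hm : AEStronglyMeasurable f ℙ) {C : ℝ}
    (h : ∀ᵐ ω ∂(ℙ : Measure Ω), |f ω| ≤ C) : Integrable f ℙ :=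
  ⟨hm, HasFiniteIntegral.of_bounded (by simpa [Real.norm_eq_abs] using h)⟩

lemma aux_int_ind {f : Ω → ℝ} {A : Set Ω} (hA : MeasurableSet A)
    (h : ∀ᵐ ω ∂(ℙ : Measure Ω), (ω ∈ A → f ω = 1) ∧ (ω ∉ A → f ω = -1)) :
    ∫ ω, f ω = 2 * (ℙ A).toReal - 1 := by
  have hae : f =ᵐ[ℙ] fun ω => A.indicator (fun _ => (2:ℝ)) ω - 1 := by
    filter_upwards [h] with ω hω
    by_cases hωA : ω ∈ A
    · norm_num [Set.indicator_of_mem hωA, hω.1 hωA]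
    · simp [Set.indicator_of_notMem hωA, hω.2 hωA]
  rw [integral_congr_ae hae,
    integral_sub ((integrable_const (2:ℝ)).indicator hA) (integrable_const 1),
    integral_indicator_const _ hA, integral_const]
  simp [measure_univ, smul_eq_mul, mul_comm]
  rfl

lemma aux_pm {f : Ω → ℝ} (hm : Measurable f)
    (hu : Measure.map f ℙ = (1/2 : ENNReal) • Measure.dirac (1:ℝ) +
      (1/2 : ENNReal) • Measure.dirac (-1:ℝ)) :
    ∀ᵐ ω ∂(ℙ : Measure Ω), f ω = 1 ∨ f ω = -1 := by
  have hs : MeasurableSet ({1, -1} : Set ℝ) :=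
    (measurableSet_singleton (-1:ℝ)).insert 1
  have h0 : ℙ (f ⁻¹' ({1, -1} : Set ℝ)ᶜ) = 0 := by
    rw [← Measure.map_apply hm hs.compl, hu]
    simp [Measure.dirac_apply' _ hs.compl]
  have hset : {ω | ¬(f ω = 1 ∨ f ω = -1)} = f ⁻¹' ({1, -1} : Set ℝ)ᶜ := by
    ext ω; simp [not_or]
  rw [ae_iff, hset]
  exact h0

lemma aux_mean {f : Ω → ℝ} (hm : Measurable f)
    (hu : Measure.map f ℙ = (1/2 : ENNReal) • Measure.dirac (1:ℝ) +
      (1/2 : ENNReal) • Measure.dirac (-1:ℝ)) :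
    ∫ ω, f ω = 0 := by
  have hA : MeasurableSet {ω | f ω = 1} := hm (measurableSet_singleton 1)
  have hp : ℙ {ω | f ω = 1} = 1/2 := by
    rw [show {ω | f ω = 1} = f ⁻¹' {1} from rfl,
      ← Measure.map_apply hm (measurableSet_singleton 1), hu]
    simp [Measure.dirac_apply' _ (measurableSet_singleton (1:ℝ)),
      Set.indicator_of_notMem (show (-1:ℝ) ∉ ({1}:Set ℝ) by norm_num)]
  have := aux_int_ind (f := f) hA ?_
  · rw [this, hp]
    norm_num
  · filter_upwards [aux_pm hm hu] with ω hω
    refine ⟨fun h => h, fun h => ?_⟩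
    rcases hω with h1 | h1
    · exact absurd h1 h
    · exact h1

lemma aux_triple {g : Fin 3 → Ω → ℝ}
    (hg : iIndepFun g ℙ) (hm : ∀ i, Measurable (g i)) :
    ∫ ω, g 0 ω * g 1 ω * g 2 ω = (∫ ω, g 0 ω) * (∫ ω, g 1 ω) * (∫ ω, g 2 ω) := by
  have h01 : IndepFun (g 0 * g 1) (g 2) ℙ :=
    hg.indepFun_mul_left hm 0 1 2 (by decide) (by decide)
  have e1 : ∫ ω, g 0 ω * g 1 ω * g 2 ω = ∫ ω, (g 0 * g 1) ω * g 2 ω := rfl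
  rw [e1,
    show (∫ ω, (g 0 * g 1) ω * g 2 ω) = ∫ ω, ((g 0 * g 1) * g 2) ω from rfl,
    h01.integral_mul_eq_mul_integral ((hm 0).mul (hm 1)).aestronglyMeasurable (hm 2).aestronglyMeasurable,
    show (∫ ω, (g 0 * g 1) ω) = ∫ ω, g 0 ω * g 1 ω from rfl,
    show (∫ ω, g 0 ω * g 1 ω) = ∫ ω, (g 0 * g 1) ω from rfl,
    (hg.indepFun (show (0:Fin 3) ≠ 1 by decide)).integral_mul_eq_mul_integral
      (hm 0).aestronglyMeasurable (hm 1).aestronglyMeasurable]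

lemma abs_mul_le' {a b A B : ℝ} (ha : |a| ≤ A) (hb : |b| ≤ B) : |a * b| ≤ A * B := by
  rw [abs_mul]
  exact mul_le_mul ha hb (abs_nonneg b) ((abs_nonneg a).trans ha)

lemma aux_triple' (x y : Fin 3 → Ω → ℝ)
    (hx : ∀ i, Measurable (x i)) (hy : ∀ i, Measurable (y i))
    (hind : iIndepFun (fun i ω => (x i ω, y i ω)) ℙ)
    (φ0 φ1 φ2 : ℝ × ℝ → ℝ) (h0 : Measurable φ0) (h1 : Measurable φ1) (h2 : Measurable φ2) :
    ∫ ω, φ0 (x 0 ω, y 0 ω) * φ1 (x 1 ω, y 1 ω) * φ2 (x 2 ω, y 2 ω)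
      = (∫ ω, φ0 (x 0 ω, y 0 ω)) * (∫ ω, φ1 (x 1 ω, y 1 ω)) * (∫ ω, φ2 (x 2 ω, y 2 ω)) := by
  have hφ : ∀ i, Measurable (![φ0, φ1, φ2] i) := by
    intro i; fin_cases i <;> simpa
  have hg : iIndepFun
      (fun i => ![φ0, φ1, φ2] i ∘ (fun ω => (x i ω, y i ω))) ℙ :=
    hind.comp _ hφ
  exact aux_triple hg (fun i => (hφ i).comp ((hx i).prodMk (hy i)))

end Aux

theorem cov_sign_triple_sums
    {Ω : Type*} [MeasureSpace Ω] [IsProbabilityMeasure (ℙ : Measure Ω)]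
    (x y : Fin 3 → Ω → ℝ)
    (hx : ∀ i, Measurable (x i)) (hy : ∀ i, Measurable (y i))
    (hind : iIndepFun (fun i ω => (x i ω, y i ω)) ℙ)
    (hxu : ∀ i, Measure.map (x i) ℙ =
      (1 / 2 : ENNReal) • Measure.dirac (1 : ℝ) +
        (1 / 2 : ENNReal) • Measure.dirac (-1 : ℝ))
    (hyu : ∀ i, Measure.map (y i) ℙ =
      (1 / 2 : ENNReal) • Measure.dirac (1 : ℝ) +
        (1 / 2 : ENNReal) • Measure.dirac (-1 : ℝ))
    (hagree : ∀ i, ℙ {ω | x i ω = y i ω} = 1 / 3) :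
    (∫ ω, Real.sign (x 0 ω + x 1 ω + x 2 ω) * Real.sign (y 0 ω + y 1 ω + y 2 ω))
      - (∫ ω, Real.sign (x 0 ω + x 1 ω + x 2 ω)) *
        (∫ ω, Real.sign (y 0 ω + y 1 ω + y 2 ω)) = -7 / 27 := by
  have pmx : ∀ i, ∀ᵐ ω ∂(ℙ : Measure Ω), x i ω = 1 ∨ x i ω = -1 :=
    fun i => aux_pm (hx i) (hxu i)
  have pmy : ∀ i, ∀ᵐ ω ∂(ℙ : Measure Ω), y i ω = 1 ∨ y i ω = -1 :=
    fun i => aux_pm (hy i) (hyu i)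
  have bx : ∀ i, ∀ᵐ ω ∂(ℙ : Measure Ω), |x i ω| ≤ 1 := by
    intro i
    filter_upwards [pmx i] with ω h
    rcases h with h | h <;> rw [h] <;> norm_num
  have bY : ∀ i, ∀ᵐ ω ∂(ℙ : Measure Ω), |y i ω| ≤ 1 := by
    intro i
    filter_upwards [pmy i] with ω h
    rcases h with h | h <;> rw [h] <;> norm_num
  have mx : ∀ i, ∫ ω, x i ω = 0 := fun i => aux_mean (hx i) (hxu i)
  have my : ∀ i, ∫ ω, y i ω = 0 := fun i => aux_mean (hy i) (hyu i)
  -- correlation of matched pairs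
  have mxy : ∀ i, ∫ ω, x i ω * y i ω = -(1/3) := by
    intro i
    have hA : MeasurableSet {ω | x i ω = y i ω} := measurableSet_eq_fun (hx i) (hy i)
    have haux : ∀ᵐ ω ∂(ℙ : Measure Ω),
        (ω ∈ {ω | x i ω = y i ω} → x i ω * y i ω = 1) ∧
        (ω ∉ {ω | x i ω = y i ω} → x i ω * y i ω = -1) := by
      filter_upwards [pmx i, pmy i] with ω h1 h2
      constructor
      · intro hmem
        have hxy : x i ω = y i ω := hmem
        rcases h2 with h2 | h2 <;> rw [hxy, h2] <;> norm_num
      · intro hmem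
        have hxy : ¬ x i ω = y i ω := hmem
        rcases h1 with h1 | h1 <;> rcases h2 with h2 | h2 <;>
          first
            | (exfalso; exact hxy (h1.trans h2.symm))
            | (rw [h1, h2]; norm_num)
    have h := aux_int_ind hA haux
    rw [h, hagree i]
    norm_num
  -- cross terms vanish
  have mxyij : ∀ i j, i ≠ j → ∫ ω, x i ω * y j ω = 0 := by
    intro i j hij
    have hI : IndepFun (x i) (y j) ℙ :=
      (hind.indepFun hij).comp measurable_fst measurable_snd
    have h := hI.integral_mul_eq_mul_integral (hx i).aestronglyMeasurable (hy j).aestronglyMeasurable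
    have e : (∫ ω, x i ω * y j ω) = integral ℙ (x i * y j) := rfl
    rw [e, h]
    have ex : integral ℙ (x i) = ∫ ω, x i ω := rfl
    have ey : integral ℙ (y j) = ∫ ω, y j ω := rfl
    rw [ex, ey, mx i, my j, mul_zero]
  -- integrability
  have ixy : ∀ i j, Integrable (fun ω => x i ω * y j ω) ℙ := by
    intro i j
    refine aux_integrable ((hx i).mul (hy j)).aestronglyMeasurable (C := 1) ?_
    filter_upwards [bx i, bY j] with ω h1 h2
    simpa using abs_mul_le' h1 h2
  have intx : ∀ i, Integrable (x i) ℙ :=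
    fun i => aux_integrable (hx i).aestronglyMeasurable (bx i)
  have inty : ∀ i, Integrable (y i) ℙ :=
    fun i => aux_integrable (hy i).aestronglyMeasurable (bY i)
  have iP : Integrable (fun ω => x 0 ω * x 1 ω * x 2 ω) ℙ := by
    refine aux_integrable (((hx 0).mul (hx 1)).mul (hx 2)).aestronglyMeasurable (C := 1) ?_
    filter_upwards [bx 0, bx 1, bx 2] with ω h0 h1 h2
    simpa using abs_mul_le' (abs_mul_le' h0 h1) h2
  have iQ : Integrable (fun ω => y 0 ω * y 1 ω * y 2 ω) ℙ := by
    refine aux_integrable (((hy 0).mul (hy 1)).mul (hy 2)).aestronglyMeasurable (C := 1) ?_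
    filter_upwards [bY 0, bY 1, bY 2] with ω h0 h1 h2
    simpa using abs_mul_le' (abs_mul_le' h0 h1) h2
  have iAB : Integrable (fun ω => (x 0 ω + x 1 ω + x 2 ω) * (y 0 ω + y 1 ω + y 2 ω)) ℙ := by
    refine aux_integrable ((((hx 0).add (hx 1)).add (hx 2)).mul
      (((hy 0).add (hy 1)).add (hy 2))).aestronglyMeasurable (C := 9) ?_
    filter_upwards [bx 0, bx 1, bx 2, bY 0, bY 1, bY 2] with ω a0 a1 a2 b0 b1 b2
    have hA : |x 0 ω + x 1 ω + x 2 ω| ≤ 3 := (abs_add_three _ _ _).trans (by linarith)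
    have hB : |y 0 ω + y 1 ω + y 2 ω| ≤ 3 := (abs_add_three _ _ _).trans (by linarith)
    exact (abs_mul_le' hA hB).trans (by norm_num)
  have iAQ : Integrable (fun ω => (x 0 ω + x 1 ω + x 2 ω) * (y 0 ω * y 1 ω * y 2 ω)) ℙ := by
    refine aux_integrable ((((hx 0).add (hx 1)).add (hx 2)).mul
      (((hy 0).mul (hy 1)).mul (hy 2))).aestronglyMeasurable (C := 3) ?_
    filter_upwards [bx 0, bx 1, bx 2, bY 0, bY 1, bY 2] with ω a0 a1 a2 b0 b1 b2
    have hA : |x 0 ω + x 1 ω + x 2 ω| ≤ 3 := (abs_add_three _ _ _).trans (by linarith)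
    have hQ : |y 0 ω * y 1 ω * y 2 ω| ≤ 1 := by
      simpa using abs_mul_le' (abs_mul_le' b0 b1) b2
    simpa using abs_mul_le' hA hQ
  have iPB : Integrable (fun ω => (x 0 ω * x 1 ω * x 2 ω) * (y 0 ω + y 1 ω + y 2 ω)) ℙ := by
    refine aux_integrable ((((hx 0).mul (hx 1)).mul (hx 2)).mul
      (((hy 0).add (hy 1)).add (hy 2))).aestronglyMeasurable (C := 3) ?_
    filter_upwards [bx 0, bx 1, bx 2, bY 0, bY 1, bY 2] with ω a0 a1 a2 b0 b1 b2
    have hB : |y 0 ω + y 1 ω + y 2 ω| ≤ 3 := (abs_add_three _ _ _).trans (by linarith)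
    have hP : |x 0 ω * x 1 ω * x 2 ω| ≤ 1 := by
      simpa using abs_mul_le' (abs_mul_le' a0 a1) a2
    simpa using abs_mul_le' hP hB
  have iPQ : Integrable (fun ω => (x 0 ω * x 1 ω * x 2 ω) * (y 0 ω * y 1 ω * y 2 ω)) ℙ := by
    refine aux_integrable ((((hx 0).mul (hx 1)).mul (hx 2)).mul
      (((hy 0).mul (hy 1)).mul (hy 2))).aestronglyMeasurable (C := 1) ?_
    filter_upwards [bx 0, bx 1, bx 2, bY 0, bY 1, bY 2] with ω a0 a1 a2 b0 b1 b2
    have hP : |x 0 ω * x 1 ω * x 2 ω| ≤ 1 := by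
      simpa using abs_mul_le' (abs_mul_le' a0 a1) a2
    have hQ : |y 0 ω * y 1 ω * y 2 ω| ≤ 1 := by
      simpa using abs_mul_le' (abs_mul_le' b0 b1) b2
    simpa using abs_mul_le' hP hQ
  -- triple product identities
  have tP : (∫ ω, x 0 ω * x 1 ω * x 2 ω) = 0 := by
    have h := aux_triple' x y hx hy hind (fun p => p.1) (fun p => p.1) (fun p => p.1)
      measurable_fst measurable_fst measurable_fst
    rw [show (∫ ω, x 0 ω * x 1 ω * x 2 ω)
        = ∫ ω, (fun p : ℝ × ℝ => p.1) (x 0 ω, y 0 ω) * (fun p : ℝ × ℝ => p.1) (x 1 ω, y 1 ω)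
          * (fun p : ℝ × ℝ => p.1) (x 2 ω, y 2 ω) from rfl, h]
    rw [show (∫ ω, (fun p : ℝ × ℝ => p.1) (x 0 ω, y 0 ω)) = ∫ ω, x 0 ω from rfl, mx 0]
    ring
  have tQ : (∫ ω, y 0 ω * y 1 ω * y 2 ω) = 0 := by
    have h := aux_triple' x y hx hy hind (fun p => p.2) (fun p => p.2) (fun p => p.2)
      measurable_snd measurable_snd measurable_snd
    rw [show (∫ ω, y 0 ω * y 1 ω * y 2 ω)
        = ∫ ω, (fun p : ℝ × ℝ => p.2) (x 0 ω, y 0 ω) * (fun p : ℝ × ℝ => p.2) (x 1 ω, y 1 ω)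
          * (fun p : ℝ × ℝ => p.2) (x 2 ω, y 2 ω) from rfl, h]
    rw [show (∫ ω, (fun p : ℝ × ℝ => p.2) (x 0 ω, y 0 ω)) = ∫ ω, y 0 ω from rfl, my 0]
    ring
  have tPQ : (∫ ω, x 0 ω * y 0 ω * (x 1 ω * y 1 ω) * (x 2 ω * y 2 ω)) = -(1/27) := by
    have h := aux_triple' x y hx hy hind (fun p => p.1 * p.2) (fun p => p.1 * p.2)
      (fun p => p.1 * p.2) (measurable_fst.mul measurable_snd)
      (measurable_fst.mul measurable_snd) (measurable_fst.mul measurable_snd)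
    rw [show (∫ ω, x 0 ω * y 0 ω * (x 1 ω * y 1 ω) * (x 2 ω * y 2 ω))
        = ∫ ω, (fun p : ℝ × ℝ => p.1 * p.2) (x 0 ω, y 0 ω)
          * (fun p : ℝ × ℝ => p.1 * p.2) (x 1 ω, y 1 ω)
          * (fun p : ℝ × ℝ => p.1 * p.2) (x 2 ω, y 2 ω) from rfl, h]
    rw [show (∫ ω, (fun p : ℝ × ℝ => p.1 * p.2) (x 0 ω, y 0 ω)) = ∫ ω, x 0 ω * y 0 ω from rfl,
      show (∫ ω, (fun p : ℝ × ℝ => p.1 * p.2) (x 1 ω, y 1 ω)) = ∫ ω, x 1 ω * y 1 ω from rfl,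
      show (∫ ω, (fun p : ℝ × ℝ => p.1 * p.2) (x 2 ω, y 2 ω)) = ∫ ω, x 2 ω * y 2 ω from rfl,
      mxy 0, mxy 1, mxy 2]
    norm_num
  have tAQ0 : (∫ ω, x 0 ω * y 0 ω * y 1 ω * y 2 ω) = 0 := by
    have h := aux_triple' x y hx hy hind (fun p => p.1 * p.2) (fun p => p.2) (fun p => p.2)
      (measurable_fst.mul measurable_snd) measurable_snd measurable_snd
    rw [show (∫ ω, x 0 ω * y 0 ω * y 1 ω * y 2 ω)
        = ∫ ω, (fun p : ℝ × ℝ => p.1 * p.2) (x 0 ω, y 0 ω)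
          * (fun p : ℝ × ℝ => p.2) (x 1 ω, y 1 ω)
          * (fun p : ℝ × ℝ => p.2) (x 2 ω, y 2 ω) from rfl, h]
    rw [show (∫ ω, (fun p : ℝ × ℝ => p.2) (x 1 ω, y 1 ω)) = ∫ ω, y 1 ω from rfl, my 1]
    ring
  have tAQ1 : (∫ ω, y 0 ω * (x 1 ω * y 1 ω) * y 2 ω) = 0 := by
    have h := aux_triple' x y hx hy hind (fun p => p.2) (fun p => p.1 * p.2) (fun p => p.2)
      measurable_snd (measurable_fst.mul measurable_snd) measurable_snd
    rw [show (∫ ω, y 0 ω * (x 1 ω * y 1 ω) * y 2 ω)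
        = ∫ ω, (fun p : ℝ × ℝ => p.2) (x 0 ω, y 0 ω)
          * (fun p : ℝ × ℝ => p.1 * p.2) (x 1 ω, y 1 ω)
          * (fun p : ℝ × ℝ => p.2) (x 2 ω, y 2 ω) from rfl, h]
    rw [show (∫ ω, (fun p : ℝ × ℝ => p.2) (x 0 ω, y 0 ω)) = ∫ ω, y 0 ω from rfl, my 0]
    ring
  have tAQ2 : (∫ ω, y 0 ω * y 1 ω * (x 2 ω * y 2 ω)) = 0 := by
    have h := aux_triple' x y hx hy hind (fun p => p.2) (fun p => p.2) (fun p => p.1 * p.2)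
      measurable_snd measurable_snd (measurable_fst.mul measurable_snd)
    rw [show (∫ ω, y 0 ω * y 1 ω * (x 2 ω * y 2 ω))
        = ∫ ω, (fun p : ℝ × ℝ => p.2) (x 0 ω, y 0 ω)
          * (fun p : ℝ × ℝ => p.2) (x 1 ω, y 1 ω)
          * (fun p : ℝ × ℝ => p.1 * p.2) (x 2 ω, y 2 ω) from rfl, h]
    rw [show (∫ ω, (fun p : ℝ × ℝ => p.2) (x 0 ω, y 0 ω)) = ∫ ω, y 0 ω from rfl, my 0]
    ring
  have tPB0 : (∫ ω, x 0 ω * y 0 ω * x 1 ω * x 2 ω) = 0 := by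
    have h := aux_triple' x y hx hy hind (fun p => p.1 * p.2) (fun p => p.1) (fun p => p.1)
      (measurable_fst.mul measurable_snd) measurable_fst measurable_fst
    rw [show (∫ ω, x 0 ω * y 0 ω * x 1 ω * x 2 ω)
        = ∫ ω, (fun p : ℝ × ℝ => p.1 * p.2) (x 0 ω, y 0 ω)
          * (fun p : ℝ × ℝ => p.1) (x 1 ω, y 1 ω)
          * (fun p : ℝ × ℝ => p.1) (x 2 ω, y 2 ω) from rfl, h]
    rw [show (∫ ω, (fun p : ℝ × ℝ => p.1) (x 1 ω, y 1 ω)) = ∫ ω, x 1 ω from rfl, mx 1]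
    ring
  have tPB1 : (∫ ω, x 0 ω * (x 1 ω * y 1 ω) * x 2 ω) = 0 := by
    have h := aux_triple' x y hx hy hind (fun p => p.1) (fun p => p.1 * p.2) (fun p => p.1)
      measurable_fst (measurable_fst.mul measurable_snd) measurable_fst
    rw [show (∫ ω, x 0 ω * (x 1 ω * y 1 ω) * x 2 ω)
        = ∫ ω, (fun p : ℝ × ℝ => p.1) (x 0 ω, y 0 ω)
          * (fun p : ℝ × ℝ => p.1 * p.2) (x 1 ω, y 1 ω)
          * (fun p : ℝ × ℝ => p.1) (x 2 ω, y 2 ω) from rfl, h]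
    rw [show (∫ ω, (fun p : ℝ × ℝ => p.1) (x 0 ω, y 0 ω)) = ∫ ω, x 0 ω from rfl, mx 0]
    ring
  have tPB2 : (∫ ω, x 0 ω * x 1 ω * (x 2 ω * y 2 ω)) = 0 := by
    have h := aux_triple' x y hx hy hind (fun p => p.1) (fun p => p.1) (fun p => p.1 * p.2)
      measurable_fst measurable_fst (measurable_fst.mul measurable_snd)
    rw [show (∫ ω, x 0 ω * x 1 ω * (x 2 ω * y 2 ω))
        = ∫ ω, (fun p : ℝ × ℝ => p.1) (x 0 ω, y 0 ω)
          * (fun p : ℝ × ℝ => p.1) (x 1 ω, y 1 ω)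
          * (fun p : ℝ × ℝ => p.1 * p.2) (x 2 ω, y 2 ω) from rfl, h]
    rw [show (∫ ω, (fun p : ℝ × ℝ => p.1) (x 0 ω, y 0 ω)) = ∫ ω, x 0 ω from rfl, mx 0]
    ring
  -- the four main expectations
  have iprod : ∀ i j, Integrable (fun ω => x i ω * y j ω * y ((0:Fin 3)) ω) ℙ := by
    intro i j
    exact aux_integrable (((hx i).mul (hy j)).mul (hy 0)).aestronglyMeasurable
      (by filter_upwards [bx i, bY j, bY 0] with ω a b c;
          simpa using abs_mul_le' (abs_mul_le' a b) c)
  have hAB : ∫ ω, (x 0 ω + x 1 ω + x 2 ω) * (y 0 ω + y 1 ω + y 2 ω) = -1 := by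
    have e : (fun ω => (x 0 ω + x 1 ω + x 2 ω) * (y 0 ω + y 1 ω + y 2 ω))
        = fun ω => x 0 ω * y 0 ω + x 1 ω * y 1 ω + x 2 ω * y 2 ω + x 0 ω * y 1 ω
            + x 0 ω * y 2 ω + x 1 ω * y 0 ω + x 1 ω * y 2 ω + x 2 ω * y 0 ω
            + x 2 ω * y 1 ω := by
      funext ω; ring
    rw [e]
    have p1 := ixy 0 0
    have p2 : Integrable (fun ω => x 0 ω * y 0 ω + x 1 ω * y 1 ω) ℙ := p1.add (ixy 1 1)
    have p3 : Integrable (fun ω => x 0 ω * y 0 ω + x 1 ω * y 1 ω + x 2 ω * y 2 ω) ℙ :=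
      p2.add (ixy 2 2)
    have p4 : Integrable (fun ω => x 0 ω * y 0 ω + x 1 ω * y 1 ω + x 2 ω * y 2 ω
        + x 0 ω * y 1 ω) ℙ := p3.add (ixy 0 1)
    have p5 : Integrable (fun ω => x 0 ω * y 0 ω + x 1 ω * y 1 ω + x 2 ω * y 2 ω
        + x 0 ω * y 1 ω + x 0 ω * y 2 ω) ℙ := p4.add (ixy 0 2)
    have p6 : Integrable (fun ω => x 0 ω * y 0 ω + x 1 ω * y 1 ω + x 2 ω * y 2 ω
        + x 0 ω * y 1 ω + x 0 ω * y 2 ω + x 1 ω * y 0 ω) ℙ := p5.add (ixy 1 0)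
    have p7 : Integrable (fun ω => x 0 ω * y 0 ω + x 1 ω * y 1 ω + x 2 ω * y 2 ω
        + x 0 ω * y 1 ω + x 0 ω * y 2 ω + x 1 ω * y 0 ω + x 1 ω * y 2 ω) ℙ :=
      p6.add (ixy 1 2)
    have p8 : Integrable (fun ω => x 0 ω * y 0 ω + x 1 ω * y 1 ω + x 2 ω * y 2 ω
        + x 0 ω * y 1 ω + x 0 ω * y 2 ω + x 1 ω * y 0 ω + x 1 ω * y 2 ω
        + x 2 ω * y 0 ω) ℙ := p7.add (ixy 2 0)
    rw [integral_add p8 (ixy 2 1), integral_add p7 (ixy 2 0), integral_add p6 (ixy 1 2),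
      integral_add p5 (ixy 1 0), integral_add p4 (ixy 0 2), integral_add p3 (ixy 0 1),
      integral_add p2 (ixy 2 2), integral_add p1 (ixy 1 1),
      mxy 0, mxy 1, mxy 2, mxyij 0 1 (by decide), mxyij 0 2 (by decide),
      mxyij 1 0 (by decide), mxyij 1 2 (by decide), mxyij 2 0 (by decide),
      mxyij 2 1 (by decide)]
    norm_num
  have hAQ : ∫ ω, (x 0 ω + x 1 ω + x 2 ω) * (y 0 ω * y 1 ω * y 2 ω) = 0 := by
    have e : (fun ω => (x 0 ω + x 1 ω + x 2 ω) * (y 0 ω * y 1 ω * y 2 ω))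
        = fun ω => x 0 ω * y 0 ω * y 1 ω * y 2 ω + y 0 ω * (x 1 ω * y 1 ω) * y 2 ω
            + y 0 ω * y 1 ω * (x 2 ω * y 2 ω) := by
      funext ω; ring
    have j1 : Integrable (fun ω => x 0 ω * y 0 ω * y 1 ω * y 2 ω) ℙ :=
      aux_integrable ((((hx 0).mul (hy 0)).mul (hy 1)).mul (hy 2)).aestronglyMeasurable
        (by filter_upwards [bx 0, bY 0, bY 1, bY 2] with ω a b c d;
            simpa using abs_mul_le' (abs_mul_le' (abs_mul_le' a b) c) d)
    have j2 : Integrable (fun ω => y 0 ω * (x 1 ω * y 1 ω) * y 2 ω) ℙ :=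
      aux_integrable (((hy 0).mul ((hx 1).mul (hy 1))).mul (hy 2)).aestronglyMeasurable
        (by filter_upwards [bY 0, bx 1, bY 1, bY 2] with ω a b c d;
            simpa using abs_mul_le' (abs_mul_le' a (abs_mul_le' b c)) d)
    have j3 : Integrable (fun ω => y 0 ω * y 1 ω * (x 2 ω * y 2 ω)) ℙ :=
      aux_integrable (((hy 0).mul (hy 1)).mul ((hx 2).mul (hy 2))).aestronglyMeasurable
        (by filter_upwards [bY 0, bY 1, bx 2, bY 2] with ω a b c d;
            simpa using abs_mul_le' (abs_mul_le' a b) (abs_mul_le' c d))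
    have j12 : Integrable (fun ω => x 0 ω * y 0 ω * y 1 ω * y 2 ω
        + y 0 ω * (x 1 ω * y 1 ω) * y 2 ω) ℙ := j1.add j2
    rw [e, integral_add j12 j3, integral_add j1 j2, tAQ0, tAQ1, tAQ2]
    norm_num
  have hPB : ∫ ω, (x 0 ω * x 1 ω * x 2 ω) * (y 0 ω + y 1 ω + y 2 ω) = 0 := by
    have e : (fun ω => (x 0 ω * x 1 ω * x 2 ω) * (y 0 ω + y 1 ω + y 2 ω))
        = fun ω => x 0 ω * y 0 ω * x 1 ω * x 2 ω + x 0 ω * (x 1 ω * y 1 ω) * x 2 ω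
            + x 0 ω * x 1 ω * (x 2 ω * y 2 ω) := by
      funext ω; ring
    have j1 : Integrable (fun ω => x 0 ω * y 0 ω * x 1 ω * x 2 ω) ℙ :=
      aux_integrable ((((hx 0).mul (hy 0)).mul (hx 1)).mul (hx 2)).aestronglyMeasurable
        (by filter_upwards [bx 0, bY 0, bx 1, bx 2] with ω a b c d;
            simpa using abs_mul_le' (abs_mul_le' (abs_mul_le' a b) c) d)
    have j2 : Integrable (fun ω => x 0 ω * (x 1 ω * y 1 ω) * x 2 ω) ℙ :=
      aux_integrable (((hx 0).mul ((hx 1).mul (hy 1))).mul (hx 2)).aestronglyMeasurable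
        (by filter_upwards [bx 0, bx 1, bY 1, bx 2] with ω a b c d;
            simpa using abs_mul_le' (abs_mul_le' a (abs_mul_le' b c)) d)
    have j3 : Integrable (fun ω => x 0 ω * x 1 ω * (x 2 ω * y 2 ω)) ℙ :=
      aux_integrable (((hx 0).mul (hx 1)).mul ((hx 2).mul (hy 2))).aestronglyMeasurable
        (by filter_upwards [bx 0, bx 1, bx 2, bY 2] with ω a b c d;
            simpa using abs_mul_le' (abs_mul_le' a b) (abs_mul_le' c d))
    have j12 : Integrable (fun ω => x 0 ω * y 0 ω * x 1 ω * x 2 ω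
        + x 0 ω * (x 1 ω * y 1 ω) * x 2 ω) ℙ := j1.add j2
    rw [e, integral_add j12 j3, integral_add j1 j2, tPB0, tPB1, tPB2]
    norm_num
  have hPQ : ∫ ω, (x 0 ω * x 1 ω * x 2 ω) * (y 0 ω * y 1 ω * y 2 ω) = -(1/27) := by
    have e : (fun ω => (x 0 ω * x 1 ω * x 2 ω) * (y 0 ω * y 1 ω * y 2 ω))
        = fun ω => x 0 ω * y 0 ω * (x 1 ω * y 1 ω) * (x 2 ω * y 2 ω) := by
      funext ω; ring
    rw [e, tPQ]
  -- pointwise sign identities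
  have hsx : ∀ᵐ ω ∂(ℙ : Measure Ω), Real.sign (x 0 ω + x 1 ω + x 2 ω)
      = (x 0 ω + x 1 ω + x 2 ω - x 0 ω * x 1 ω * x 2 ω) / 2 := by
    filter_upwards [pmx 0, pmx 1, pmx 2] with ω h0 h1 h2
    rcases h0 with h0 | h0 <;> rcases h1 with h1 | h1 <;> rcases h2 with h2 | h2 <;>
      rw [h0, h1, h2] <;> norm_num [Real.sign]
  have hsy : ∀ᵐ ω ∂(ℙ : Measure Ω), Real.sign (y 0 ω + y 1 ω + y 2 ω)
      = (y 0 ω + y 1 ω + y 2 ω - y 0 ω * y 1 ω * y 2 ω) / 2 := by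
    filter_upwards [pmy 0, pmy 1, pmy 2] with ω h0 h1 h2
    rcases h0 with h0 | h0 <;> rcases h1 with h1 | h1 <;> rcases h2 with h2 | h2 <;>
      rw [h0, h1, h2] <;> norm_num [Real.sign]
  -- means of the signs
  have ex : (∫ ω, Real.sign (x 0 ω + x 1 ω + x 2 ω)) = 0 := by
    rw [integral_congr_ae hsx]
    have iA1 : Integrable (fun ω => x 0 ω + x 1 ω) ℙ := (intx 0).add (intx 1)
    have iA : Integrable (fun ω => x 0 ω + x 1 ω + x 2 ω) ℙ := iA1.add (intx 2)
    rw [integral_div, integral_sub iA iP, integral_add iA1 (intx 2),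
      integral_add (intx 0) (intx 1), mx 0, mx 1, mx 2, tP]
    norm_num
  have ey : (∫ ω, Real.sign (y 0 ω + y 1 ω + y 2 ω)) = 0 := by
    rw [integral_congr_ae hsy]
    have iB1 : Integrable (fun ω => y 0 ω + y 1 ω) ℙ := (inty 0).add (inty 1)
    have iB : Integrable (fun ω => y 0 ω + y 1 ω + y 2 ω) ℙ := iB1.add (inty 2)
    rw [integral_div, integral_sub iB iQ, integral_add iB1 (inty 2),
      integral_add (inty 0) (inty 1), my 0, my 1, my 2, tQ]
    norm_num
  -- main product
  have key : (∫ ω, Real.sign (x 0 ω + x 1 ω + x 2 ω) * Real.sign (y 0 ω + y 1 ω + y 2 ω))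
      = -7/27 := by
    have hcong : ∀ᵐ ω ∂(ℙ : Measure Ω),
        Real.sign (x 0 ω + x 1 ω + x 2 ω) * Real.sign (y 0 ω + y 1 ω + y 2 ω)
        = ((x 0 ω + x 1 ω + x 2 ω) * (y 0 ω + y 1 ω + y 2 ω)
            - (x 0 ω + x 1 ω + x 2 ω) * (y 0 ω * y 1 ω * y 2 ω)
            - (x 0 ω * x 1 ω * x 2 ω) * (y 0 ω + y 1 ω + y 2 ω)
            + (x 0 ω * x 1 ω * x 2 ω) * (y 0 ω * y 1 ω * y 2 ω)) / 4 := by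
      filter_upwards [hsx, hsy] with ω h1 h2
      rw [h1, h2]; ring
    have iS1 : Integrable (fun ω => (x 0 ω + x 1 ω + x 2 ω) * (y 0 ω + y 1 ω + y 2 ω)
        - (x 0 ω + x 1 ω + x 2 ω) * (y 0 ω * y 1 ω * y 2 ω)) ℙ := iAB.sub iAQ
    have iS2 : Integrable (fun ω => (x 0 ω + x 1 ω + x 2 ω) * (y 0 ω + y 1 ω + y 2 ω)
        - (x 0 ω + x 1 ω + x 2 ω) * (y 0 ω * y 1 ω * y 2 ω)
        - (x 0 ω * x 1 ω * x 2 ω) * (y 0 ω + y 1 ω + y 2 ω)) ℙ := iS1.sub iPB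
    rw [integral_congr_ae hcong, integral_div, integral_add iS2 iPQ,
      integral_sub iS1 iPB, integral_sub iAB iAQ, hAB, hAQ, hPB, hPQ]
    norm_num
  rw [key, ex, ey]
  norm_num
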